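/- Let F be a finite-dimensional subspace of C¹[a,b] (a < b), let a = x_1 < … < x_n = b be closed nodes at which the evaluation map F → ℝⁿ, f ↦ (f(x_1), …, f(x_n)), is injective, and let w_1, …, w_n > 0 be weights such that Σ_{k=1}^n w_k (fg)'(x_k) = f(b)g(b) − f(a)g(a) for all f, g ∈ F (i.e., the closed positive quadrature rule is exact for (FF)' := {(fg)' : f, g ∈ F} with weight function ω = 1). Then there exists a matrix Q with Q + Qᵀ = B := diag(−1,0,…,0,1) such that D := diag(w_1,…,w_n)⁻¹ Q satisfies D·(f(x_1),…,f(x_n))ᵀ = (f'(x_1),…,f'(x_n))ᵀ for every f ∈ F; that is, a closed diagonal-norm F-based SBP operator on these nodes exists. -/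

import Mathlib

open Matrix

/-- The boundary matrix `B = diag(-1, 0, …, 0, 1)` of size `(n+1) × (n+1)`. -/
noncomputable def sbpBoundaryMatrix (n : ℕ) : Matrix (Fin (n + 1)) (Fin (n + 1)) ℝ :=
  Matrix.diagonal fun i => (if i = Fin.last n then (1 : ℝ) else 0) + (if i = 0 then -1 else 0)

/-- If a closed positive quadrature rule, on nodes at which the evaluation of `F`
is injective, is exact for `(FF)' = {(fg)' : f, g ∈ F}` (with weight function `1`),
then a closed diagonal-norm `F`-based SBP operator on these nodes exists. -/
theorem exact_quadrature_yields_sbp_operator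
    (a b : ℝ) (hab : a < b)
    (F : Submodule ℝ (ℝ → ℝ)) (hFC1 : ∀ f ∈ F, ContDiff ℝ 1 f)
    (hFfin : FiniteDimensional ℝ F)
    (n : ℕ) (x : Fin (n + 1) → ℝ) (hx : StrictMono x)
    (hxa : x 0 = a) (hxb : x (Fin.last n) = b)
    (hinj : ∀ f ∈ F, (∀ k, f (x k) = 0) → f = 0)
    (w : Fin (n + 1) → ℝ) (hw : ∀ k, 0 < w k)
    (hquad : ∀ f ∈ F, ∀ g ∈ F,
      ∑ k, w k * deriv (fun y => f y * g y) (x k) = f b * g b - f a * g a) :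
    ∃ Q : Matrix (Fin (n + 1)) (Fin (n + 1)) ℝ,
      Q + Qᵀ = sbpBoundaryMatrix n ∧
      ∀ f ∈ F, ((Matrix.diagonal w)⁻¹ * Q) *ᵥ (fun k => f (x k)) =
        fun k => deriv f (x k) := by
  classical
  have hdiff : ∀ f ∈ F, Differentiable ℝ f := fun f hf => (hFC1 f hf).differentiable one_ne_zero
  set m := Module.finrank ℝ F with hm
  let bF : Module.Basis (Fin m) ℝ F := Module.finBasis ℝ F
  have hdiffi : ∀ i, Differentiable ℝ ((bF i : F) : ℝ → ℝ) := fun i => hdiff _ (bF i).2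
  set V : Matrix (Fin (n + 1)) (Fin m) ℝ := Matrix.of fun k i => ((bF i : F) : ℝ → ℝ) (x k)
    with hV
  set bb : Fin (n + 1) → ℝ :=
    fun k => (if k = Fin.last n then (1 : ℝ) else 0) + (if k = 0 then -1 else 0) with hbb
  set T : Matrix (Fin (n + 1)) (Fin m) ℝ := Matrix.of fun k i =>
    w k * deriv ((bF i : F) : ℝ → ℝ) (x k) - 2⁻¹ * bb k * ((bF i : F) : ℝ → ℝ) (x k) with hT
  set G : Matrix (Fin m) (Fin m) ℝ := Vᵀ * V with hG
  -- boundary sum lemma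
  have hbsum : ∀ y : Fin (n + 1) → ℝ, ∑ k, bb k * y k = y (Fin.last n) - y 0 := by
    intro y
    simp only [hbb, add_mul, ite_mul, one_mul, zero_mul, neg_mul, Finset.sum_add_distrib]
    rw [Finset.sum_ite_eq' Finset.univ (Fin.last n) y]
    simp [Finset.sum_ite_eq', sub_eq_add_neg]
  -- key quadrature identity in matrix form
  have hkey : Vᵀ * T + Tᵀ * V = 0 := by
    ext i j
    have hfi := (bF i).2
    have hfj := (bF j).2
    set fi : ℝ → ℝ := ((bF i : F) : ℝ → ℝ)
    set fj : ℝ → ℝ := ((bF j : F) : ℝ → ℝ)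
    have h1 : ∑ k, w k * (deriv fi (x k) * fj (x k) + fi (x k) * deriv fj (x k))
        = fi b * fj b - fi a * fj a := by
      rw [← hquad fi hfi fj hfj]
      refine Finset.sum_congr rfl fun k _ => ?_
      rw [deriv_fun_mul ((hdiffi i) (x k)) ((hdiffi j) (x k))]
    have h2 : ∑ k, bb k * (fi (x k) * fj (x k)) = fi b * fj b - fi a * fj a := by
      rw [hbsum fun k => fi (x k) * fj (x k), hxa, hxb]
    have h3 : ∀ k, V k i * T k j + T k i * V k j
        = w k * (deriv fi (x k) * fj (x k) + fi (x k) * deriv fj (x k))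
          - bb k * (fi (x k) * fj (x k)) := by
      intro k
      simp only [hV, hT, Matrix.of_apply]
      ring
    simp only [Matrix.add_apply, Matrix.mul_apply, Matrix.transpose_apply, Matrix.zero_apply]
    rw [← Finset.sum_add_distrib]
    calc ∑ k, (V k i * T k j + T k i * V k j)
        = ∑ k, (w k * (deriv fi (x k) * fj (x k) + fi (x k) * deriv fj (x k))
            - bb k * (fi (x k) * fj (x k))) := Finset.sum_congr rfl fun k _ => h3 k
      _ = 0 := by rw [Finset.sum_sub_distrib, h1, h2, sub_self]
  -- invertibility of the Gram matrix
  have hker : ∀ c : Fin m → ℝ, G *ᵥ c = 0 → c = 0 := by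
    intro c hc
    have hVc : V *ᵥ c = 0 := by
      have h1 : c ⬝ᵥ (G *ᵥ c) = (V *ᵥ c) ⬝ᵥ (V *ᵥ c) := by
        rw [hG, ← Matrix.mulVec_mulVec, dotProduct_mulVec, Matrix.vecMul_transpose]
      rw [hc, dotProduct_zero] at h1
      exact dotProduct_self_eq_zero.mp h1.symm
    set φ : F := ∑ i, c i • bF i with hφ
    have hφval : ∀ y, (φ : ℝ → ℝ) y = ∑ i, c i * ((bF i : F) : ℝ → ℝ) y := by
      intro y
      have : (φ : ℝ → ℝ) = ∑ i, c i • ((bF i : F) : ℝ → ℝ) := by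
        rw [hφ]
        push_cast [Submodule.coe_sum]
        simp
      rw [this]
      simp [Finset.sum_apply]
    have hφ0 : (φ : ℝ → ℝ) = 0 := by
      refine hinj _ φ.2 fun k => ?_
      have := congrFun hVc k
      simp only [Matrix.mulVec, dotProduct, hV, Matrix.of_apply, Pi.zero_apply] at this
      rw [hφval]
      rw [← this]
      exact Finset.sum_congr rfl fun i _ => mul_comm _ _
    have hφz : φ = 0 := Subtype.ext hφ0
    have hli := Fintype.linearIndependent_iff.mp bF.linearIndependent c (by rw [← hφ, hφz])
    funext i; exact hli i
  have hdet : IsUnit G.det := by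
    rw [isUnit_iff_ne_zero]
    intro h
    obtain ⟨v, hv0, hv⟩ := Matrix.exists_mulVec_eq_zero_iff.mpr h
    exact hv0 (hker v hv)
  have hGG : G * G⁻¹ = 1 := Matrix.mul_nonsing_inv G hdet
  have hGG' : G⁻¹ * G = 1 := Matrix.nonsing_inv_mul G hdet
  have hGsym : Gᵀ = G := by rw [hG, Matrix.transpose_mul, Matrix.transpose_transpose]
  have hGisym : (G⁻¹)ᵀ = G⁻¹ := by rw [Matrix.transpose_nonsing_inv, hGsym]
  set Mm : Matrix (Fin (n + 1)) (Fin (n + 1)) ℝ := T * G⁻¹ * Vᵀ with hMm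
  set pim : Matrix (Fin (n + 1)) (Fin (n + 1)) ℝ := V * G⁻¹ * Vᵀ with hpim
  have hMmT : Mmᵀ = V * G⁻¹ * Tᵀ := by
    rw [hMm, Matrix.transpose_mul, Matrix.transpose_mul, Matrix.transpose_transpose, hGisym,
      Matrix.mul_assoc]
  have hpiT : pimᵀ = pim := by
    rw [hpim, Matrix.transpose_mul, Matrix.transpose_mul, Matrix.transpose_transpose, hGisym,
      Matrix.mul_assoc]
  have hMV : Mm * V = T := by
    rw [hMm, Matrix.mul_assoc, ← hG, Matrix.mul_assoc, hGG', Matrix.mul_one]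
  have hpiV : pim * V = V := by
    rw [hpim, Matrix.mul_assoc, ← hG, Matrix.mul_assoc, hGG', Matrix.mul_one]
  have hVGV : ∀ X : Matrix (Fin m) (Fin (n + 1)) ℝ,
      V * G⁻¹ * Vᵀ * (V * (G⁻¹ * X)) = V * (G⁻¹ * X) := by
    intro X
    calc V * G⁻¹ * Vᵀ * (V * (G⁻¹ * X))
        = V * (G⁻¹ * (Vᵀ * V) * (G⁻¹ * X)) := by simp only [Matrix.mul_assoc]
      _ = V * (G⁻¹ * X) := by
          rw [← hG, Matrix.mul_assoc G⁻¹ G, ← Matrix.mul_assoc G⁻¹ G, hGG', Matrix.one_mul]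
  have hpiMt : pim * Mmᵀ = Mmᵀ := by
    rw [hMmT, hpim, Matrix.mul_assoc V G⁻¹ Tᵀ, hVGV Tᵀ]
  have hVtMt : Vᵀ * Mmᵀ = Tᵀ := by
    rw [hMmT, ← Matrix.mul_assoc, ← Matrix.mul_assoc, ← hG, hGG, Matrix.one_mul]
  have hVtMV : Vᵀ * (Mm + Mmᵀ) * V = 0 := by
    have h1 : Vᵀ * Mm * V = Vᵀ * T := by
      simp only [hMm, Matrix.mul_assoc]
      rw [← hG, hGG', Matrix.mul_one]
    have h2 : Vᵀ * Mmᵀ * V = Tᵀ * V := by rw [hVtMt]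
    rw [Matrix.mul_add, Matrix.add_mul, h1, h2, hkey]
  have hpisum : pim * (Mm + Mmᵀ) * pim = 0 := by
    have : pim * (Mm + Mmᵀ) * pim = V * G⁻¹ * (Vᵀ * (Mm + Mmᵀ) * V) * (G⁻¹ * Vᵀ) := by
      rw [hpim]
      simp only [Matrix.mul_assoc]
    rw [this, hVtMV, Matrix.mul_zero, Matrix.zero_mul]
  set A : Matrix (Fin (n + 1)) (Fin (n + 1)) ℝ := Mm - Mmᵀ + pim * Mmᵀ * pim with hA
  have hAt : Aᵀ = Mmᵀ - Mm + pim * (Mm * pim) := by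
    simp only [hA, Matrix.transpose_add, Matrix.transpose_sub, Matrix.transpose_mul,
      Matrix.transpose_transpose, hpiT, Matrix.mul_assoc]
  have hAanti : A + Aᵀ = 0 := by
    rw [hAt, hA]
    have : Mm - Mmᵀ + pim * Mmᵀ * pim + (Mmᵀ - Mm + pim * (Mm * pim))
        = pim * (Mm + Mmᵀ) * pim := by noncomm_ring
    rw [this, hpisum]
  have hAV : A * V = T := by
    rw [hA, Matrix.add_mul, Matrix.sub_mul, hMV, Matrix.mul_assoc (pim * Mmᵀ) pim V, hpiV,
      Matrix.mul_assoc pim Mmᵀ V, ← Matrix.mul_assoc pim Mmᵀ V, hpiMt]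
    abel
  set Bm : Matrix (Fin (n + 1)) (Fin (n + 1)) ℝ := sbpBoundaryMatrix n with hBm
  have hBsym : Bmᵀ = Bm := Matrix.diagonal_transpose _
  refine ⟨A + (2⁻¹ : ℝ) • Bm, ?_, ?_⟩
  · have : A + (2⁻¹ : ℝ) • Bm + (A + (2⁻¹ : ℝ) • Bm)ᵀ
        = (A + Aᵀ) + ((2⁻¹ : ℝ) • Bm + (2⁻¹ : ℝ) • Bm) := by
      rw [Matrix.transpose_add, Matrix.transpose_smul, hBsym]
      abel
    rw [this, hAanti, zero_add, ← add_smul]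
    norm_num
  · intro f hf
    set c : Fin m → ℝ := fun i => bF.repr ⟨f, hf⟩ i with hc
    have hrepr : ∑ i, c i • bF i = (⟨f, hf⟩ : F) := bF.sum_repr ⟨f, hf⟩
    have hfval : f = fun y => ∑ i, c i * ((bF i : F) : ℝ → ℝ) y := by
      have h1 : ((∑ i, c i • bF i : F) : ℝ → ℝ) = f := congrArg Subtype.val hrepr
      rw [← h1]
      funext y
      rw [Submodule.coe_sum]
      simp [Finset.sum_apply]
    have hderivf : ∀ k, deriv f (x k) = ∑ i, c i * deriv ((bF i : F) : ℝ → ℝ) (x k) := by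
      intro k
      rw [hfval, deriv_fun_sum fun i _ => ((hdiffi i) (x k)).const_mul (c i)]
      exact Finset.sum_congr rfl fun i _ => deriv_const_mul (c i) ((hdiffi i) (x k))
    have hvec : (fun k => f (x k)) = V *ᵥ c := by
      funext k
      rw [hfval]
      simp only [Matrix.mulVec, dotProduct, hV, Matrix.of_apply]
      exact Finset.sum_congr rfl fun i _ => mul_comm _ _
    have hQV : (A + (2⁻¹ : ℝ) • Bm) * V
        = Matrix.of fun k i => w k * deriv ((bF i : F) : ℝ → ℝ) (x k) := by
      rw [Matrix.add_mul, hAV, Matrix.smul_mul]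
      ext k i
      simp only [Matrix.add_apply, Matrix.smul_apply, hBm, sbpBoundaryMatrix,
        Matrix.diagonal_mul, hT, hV, Matrix.of_apply, smul_eq_mul, hbb]
      ring
    rw [hvec, Matrix.mulVec_mulVec, Matrix.mul_assoc, hQV]
    have hDinv : (Matrix.diagonal w)⁻¹ = Matrix.diagonal fun k => (w k)⁻¹ := by
      apply Matrix.inv_eq_right_inv
      rw [Matrix.diagonal_mul_diagonal,
        show (fun k => w k * (w k)⁻¹) = fun _ : Fin (n + 1) => (1 : ℝ) from
          funext fun k => mul_inv_cancel₀ (hw k).ne', Matrix.diagonal_one]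
    funext k
    rw [hDinv]
    have h1 : (Matrix.of fun k i => w k * deriv ((bF i : F) : ℝ → ℝ) (x k)) *ᵥ c
        = fun k => w k * deriv f (x k) := by
      funext k'
      simp only [Matrix.mulVec, dotProduct, Matrix.of_apply, hderivf,
        Finset.mul_sum]
      refine Finset.sum_congr rfl fun i _ => by ring
    rw [← Matrix.mulVec_mulVec, h1, Matrix.mulVec_diagonal]
    rw [← mul_assoc, inv_mul_cancel₀ (hw k).ne', one_mul]
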